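/- Let X and Y be nonempty separable complete metric spaces and let f : X → Y be of class Baire one. Then for every n ∈ ℕ the set D_{f,n} = {x ∈ X : ∀δ > 0, ∃ y, z ∈ B_X(x, δ), d_Y(f(y), f(z)) ≥ 1/n} has empty interior in X. -/
import Mathlib

open Filter Metric

/-- For a Baire-one function `f` between nonempty separable complete metric spaces,
each set `D_{f,n} = {x | ∀ δ > 0, ∃ y z ∈ B(x,δ), d(f y, f z) ≥ 1/n}` has empty interior. -/
theorem stmt_1 {X Y : Type*} [MetricSpace X] [MetricSpace Y]
    [Nonempty X] [Nonempty Y]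
    [TopologicalSpace.SeparableSpace X] [TopologicalSpace.SeparableSpace Y]
    [CompleteSpace X] [CompleteSpace Y]
    (f : X → Y) (g : ℕ → X → Y)
    (hg : ∀ m, Continuous (g m))
    (hconv : ∀ x, Tendsto (fun m => g m x) atTop (nhds (f x)))
    (n : ℕ) (hn : 0 < n) :
    interior {x : X | ∀ δ > 0, ∃ y ∈ Metric.ball x δ, ∃ z ∈ Metric.ball x δ,
      dist (f y) (f z) ≥ 1 / (n : ℝ)} = ∅ := by
  set D := {x : X | ∀ δ > 0, ∃ y ∈ Metric.ball x δ, ∃ z ∈ Metric.ball x δ,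
      dist (f y) (f z) ≥ 1 / (n : ℝ)} with hD
  by_contra hne
  set ε : ℝ := 1 / (5 * n) with hε
  have hεpos : 0 < ε := by positivity
  -- the closed sets F m
  set F : ℕ → Set X := fun m => {x | ∀ j ≥ m, dist (g j x) (g m x) ≤ ε} with hF
  have hFclosed : ∀ m, IsClosed (F m) := by
    intro m
    have : F m = ⋂ j ≥ m, {x | dist (g j x) (g m x) ≤ ε} := by
      ext x; simp [hF, Set.mem_iInter]
    rw [this]
    exact isClosed_biInter fun j _ =>
      isClosed_le (Continuous.dist (hg j) (hg m)) continuous_const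
  have hFunion : (⋃ m, F m) = Set.univ := by
    ext x
    simp only [Set.mem_iUnion, Set.mem_univ, iff_true]
    have hc : CauchySeq (fun m => g m x) := (hconv x).cauchySeq
    obtain ⟨m, hm⟩ := Metric.cauchySeq_iff'.1 hc ε hεpos
    exact ⟨m, fun j hj => (hm j hj).le⟩
  -- key estimate: on F m, dist (f y) (g m y) ≤ ε
  have hfg : ∀ m, ∀ y ∈ F m, dist (f y) (g m y) ≤ ε := by
    intro m y hy
    have h1 : Tendsto (fun j => dist (g j y) (g m y)) atTop (nhds (dist (f y) (g m y))) :=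
      (hconv y).dist tendsto_const_nhds
    exact le_of_tendsto h1 (eventually_atTop.2 ⟨m, fun j hj => hy j hj⟩)
  -- Baire category: the union of interiors of F m is dense
  have hdense := dense_iUnion_interior_of_closed hFclosed hFunion
  have hio : IsOpen (interior D) := isOpen_interior
  obtain ⟨x0, hx0⟩ := hdense.inter_open_nonempty (interior D) hio
    (Set.nonempty_iff_ne_empty.2 hne)
  obtain ⟨hx0D, hx0u⟩ := hx0
  obtain ⟨m, hx0m⟩ := Set.mem_iUnion.1 hx0u
  -- get a ball inside F m
  obtain ⟨r, hrpos, hrball⟩ := Metric.isOpen_iff.1 isOpen_interior x0 hx0m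
  -- continuity of g m at x0
  obtain ⟨δ, hδpos, hδ⟩ := Metric.continuous_iff.1 (hg m) x0 ε hεpos
  set ρ := min r δ with hρ
  have hρpos : 0 < ρ := lt_min hrpos hδpos
  have hx0D' : x0 ∈ D := interior_subset hx0D
  obtain ⟨y, hy, z, hz, hyz⟩ := hx0D' ρ hρpos
  have hyF : y ∈ F m := interior_subset (hrball (Metric.mem_ball.2 (lt_of_lt_of_le (Metric.mem_ball.1 hy) (min_le_left _ _))))
  have hzF : z ∈ F m := interior_subset (hrball (Metric.mem_ball.2 (lt_of_lt_of_le (Metric.mem_ball.1 hz) (min_le_left _ _))))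
  have hyδ : dist (g m y) (g m x0) < ε := hδ y (lt_of_lt_of_le (Metric.mem_ball.1 hy) (min_le_right _ _))
  have hzδ : dist (g m z) (g m x0) < ε := hδ z (lt_of_lt_of_le (Metric.mem_ball.1 hz) (min_le_right _ _))
  have : dist (f y) (f z) < 1 / n := by
    have h1 := hfg m y hyF
    have h2 := hfg m z hzF
    have key1 : dist (f y) (f z) ≤
        dist (f y) (g m y) + dist (g m y) (g m z) + dist (g m z) (f z) :=
      dist_triangle4 _ _ _ _
    have key2 : dist (g m y) (g m z) ≤ dist (g m y) (g m x0) + dist (g m x0) (g m z) :=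
      dist_triangle _ _ _
    have h3 : dist (g m x0) (g m z) < ε := by rwa [dist_comm]
    have h4 : dist (g m z) (f z) ≤ ε := by rwa [dist_comm]
    have : dist (f y) (f z) < 4 * ε := by linarith
    have h5 : 4 * ε < 1 / n := by
      rw [hε]
      have : (0:ℝ) < n := by exact_mod_cast hn
      rw [show (4:ℝ) * (1 / (5 * n)) = 4 / (5 * n) by ring,
        div_lt_div_iff₀ (by positivity) this]
      nlinarith
    linarith
  exact absurd hyz (not_le.2 this)
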